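/- Zariski descent for modules: let R be a commutative ring, M an R-module, and f : Fin n → R a family generating the unit ideal. Consider the sequence ∏_{i} M_{f i} → ∏_{i,j} M_{f i * f j} → ∏_{i,j,k} M_{f i * f j * f k}, where M_g denotes the localized module LocalizedModule at the powers of g, the first map sends a family (u_i) to the family whose (i,j)-component is (image of u_i) − (image of u_j) in M_{f i * f j}, and the second map sends a family (v_{i,j}) to the family whose (i,j,k)-component is (image of v_{i,j}) − (image of v_{i,k}) + (image of v_{j,k}) in M_{f i * f j * f k}. Then this sequence is exact at the middle term: the kernel of the second map equals the range of the first. -/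

import Mathlib

/-- The canonical further-localization map `M_g → M_h` of localized modules, for `g ∣ h`:
the unique `R`-linear map commuting with the localization maps from `M`. -/
noncomputable def locMap {R : Type*} [CommRing R] {M : Type*} [AddCommGroup M] [Module R M]
    (g h : R) (hdvd : g ∣ h) :
    LocalizedModule (Submonoid.powers g) M →ₗ[R] LocalizedModule (Submonoid.powers h) M :=
  LocalizedModule.lift _ (LocalizedModule.mkLinearMap (Submonoid.powers h) M) (by
    obtain ⟨c, rfl⟩ := hdvd
    rintro ⟨x, k, rfl⟩
    show IsUnit
      (algebraMap R (Module.End R (LocalizedModule (Submonoid.powers (g * c)) M)) (g ^ k))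
    rw [map_pow]
    refine IsUnit.pow _ ?_
    have hgc : IsUnit
        (algebraMap R (Module.End R (LocalizedModule (Submonoid.powers (g * c)) M)) (g * c)) :=
      IsLocalizedModule.map_units (LocalizedModule.mkLinearMap (Submonoid.powers (g * c)) M)
        ⟨g * c, Submonoid.mem_powers _⟩
    rw [map_mul] at hgc
    exact (((Commute.all g c).map
      (algebraMap R (Module.End R (LocalizedModule (Submonoid.powers (g * c)) M)))).isUnit_mul_iff.mp
      hgc).1)

section Stmt13Helpers

variable {R : Type*} [CommRing R] {M : Type*} [AddCommGroup M] [Module R M]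

lemma locMap_mk (g h c : R) (hc : h = g * c) (hdvd : g ∣ h) (m : M) (k : ℕ) :
    locMap g h hdvd (LocalizedModule.mk m (⟨g ^ k, k, rfl⟩ : Submonoid.powers g)) =
      LocalizedModule.mk (c ^ k • m) (⟨h ^ k, k, rfl⟩ : Submonoid.powers h) := by
  rw [locMap, LocalizedModule.lift_mk, Module.End.algebraMap_isUnit_inv_apply_eq_iff]
  show LocalizedModule.mk m 1 = _
  rw [LocalizedModule.smul'_mk, smul_smul, ← mul_pow, ← hc]
  exact (LocalizedModule.mk_cancel (⟨h ^ k, k, rfl⟩ : Submonoid.powers h) m).symm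

lemma mk_add_mk_same {S : Submonoid R} (a b : M) (s : S) :
    LocalizedModule.mk a s + LocalizedModule.mk b s = LocalizedModule.mk (a + b) s := by
  rw [LocalizedModule.mk_add_mk, ← smul_add]
  exact LocalizedModule.mk_cancel_common_left s s (a + b)

lemma mk_sub_mk_same (a b : M) {S : Submonoid R} (s : S) :
    LocalizedModule.mk a s - LocalizedModule.mk b s = LocalizedModule.mk (a - b) s := by
  rw [sub_eq_add_neg, ← LocalizedModule.mk_neg, mk_add_mk_same, ← sub_eq_add_neg]

lemma mk_raise (g : R) (m : M) (a b : ℕ) :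
    LocalizedModule.mk m (⟨g ^ a, a, rfl⟩ : Submonoid.powers g) =
      LocalizedModule.mk (g ^ b • m) (⟨g ^ (b + a), b + a, rfl⟩ : Submonoid.powers g) := by
  have : (⟨g ^ (b + a), b + a, rfl⟩ : Submonoid.powers g) =
      ⟨g ^ b, b, rfl⟩ * ⟨g ^ a, a, rfl⟩ := Subtype.ext (pow_add g b a)
  rw [this]
  exact (LocalizedModule.mk_cancel_common_left (⟨g ^ b, b, rfl⟩ : Submonoid.powers g) _ m).symm

lemma mk_eq_zero_iff (g : R) (m : M) (a : ℕ) :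
    LocalizedModule.mk m (⟨g ^ a, a, rfl⟩ : Submonoid.powers g) = 0 ↔ ∃ L : ℕ, g ^ L • m = 0 := by
  rw [show (0 : LocalizedModule (Submonoid.powers g) M) = LocalizedModule.mk 0 1 from
    (LocalizedModule.zero_mk 1).symm, LocalizedModule.mk_eq]
  constructor
  · rintro ⟨⟨u, L, rfl⟩, hu⟩
    refine ⟨L, ?_⟩
    simpa [Submonoid.smul_def] using hu
  · rintro ⟨L, hL⟩
    exact ⟨⟨g ^ L, L, rfl⟩, by simpa [Submonoid.smul_def] using hL⟩

lemma locMap_one (g h : R) (hdvd : g ∣ h) (m : M) :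
    locMap g h hdvd (LocalizedModule.mk m 1) = LocalizedModule.mk m 1 := by
  obtain ⟨c, hc⟩ := hdvd
  have h0 : (1 : Submonoid.powers g) = ⟨g ^ 0, 0, rfl⟩ := Subtype.ext (pow_zero g).symm
  have h1 : (1 : Submonoid.powers h) = ⟨h ^ 0, 0, rfl⟩ := Subtype.ext (pow_zero h).symm
  rw [h0, locMap_mk g h c hc ⟨c, hc⟩ m 0, pow_zero, one_smul, ← h1]

lemma locMap_locMap (g₁ g₂ g₃ : R) (h12 : g₁ ∣ g₂) (h23 : g₂ ∣ g₃) (h13 : g₁ ∣ g₃)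
    (x : LocalizedModule (Submonoid.powers g₁) M) :
    locMap g₂ g₃ h23 (locMap g₁ g₂ h12 x) = locMap g₁ g₃ h13 x := by
  have key : locMap (M := M) g₁ g₃ h13 = (locMap g₂ g₃ h23).comp (locMap g₁ g₂ h12) := by
    unfold locMap
    refine LocalizedModule.lift_unique _ _ _ _ ?_
    ext m
    simp only [LinearMap.coe_comp, Function.comp_apply, LocalizedModule.mkLinearMap_apply]
    rw [show (LocalizedModule.lift (Submonoid.powers g₁)
        (LocalizedModule.mkLinearMap (Submonoid.powers g₂) M) _) = locMap g₁ g₂ h12 from rfl,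
      show (LocalizedModule.lift (Submonoid.powers g₂)
        (LocalizedModule.mkLinearMap (Submonoid.powers g₃) M) _) = locMap g₂ g₃ h23 from rfl,
      locMap_one, locMap_one]
  rw [key]; rfl


end Stmt13Helpers

/-- **Zariski descent for modules.** For `f : Fin n → R` generating the unit
ideal, the Amitsur-style sequence of localized modules
`∏ᵢ M_{f i} → ∏_{i,j} M_{f i * f j} → ∏_{i,j,k} M_{f i * f j * f k}` is exact in the middle. -/
theorem stmt13 {R : Type*} [CommRing R] {M : Type*} [AddCommGroup M] [Module R M]
    {n : ℕ} (f : Fin n → R) (hf : Ideal.span (Set.range f) = ⊤) :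
    {v : ∀ p : Fin n × Fin n, LocalizedModule (Submonoid.powers (f p.1 * f p.2)) M |
      ∀ i j k : Fin n,
        locMap (f i * f j) (f i * f j * f k) (dvd_mul_right _ _) (v (i, j))
          - locMap (f i * f k) (f i * f j * f k) ⟨f j, by ring⟩ (v (i, k))
          + locMap (f j * f k) (f i * f j * f k) ⟨f i, by ring⟩ (v (j, k)) = 0} =
    Set.range (fun (u : ∀ i, LocalizedModule (Submonoid.powers (f i)) M) =>
      fun p : Fin n × Fin n =>
        locMap (f p.1) (f p.1 * f p.2) (dvd_mul_right _ _) (u p.1)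
          - locMap (f p.2) (f p.1 * f p.2) (dvd_mul_left _ _) (u p.2)) := by
  ext v
  simp only [Set.mem_setOf_eq, Set.mem_range]
  constructor
  · -- forward: cocycle is a coboundary
    intro hv
    -- Step 1: choose representatives
    have hrep : ∀ p : Fin n × Fin n, ∃ q : M × ℕ,
        v p = LocalizedModule.mk q.1
          (⟨(f p.1 * f p.2) ^ q.2, q.2, rfl⟩ : Submonoid.powers (f p.1 * f p.2)) := by
      intro p
      refine LocalizedModule.induction_on (fun m s => ?_) (v p)
      rcases s with ⟨s, k, rfl⟩
      exact ⟨(m, k), rfl⟩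
    choose q hq using hrep
    -- Step 2: common denominator exponent N0
    set N0 : ℕ := Finset.univ.sup (fun p : Fin n × Fin n => (q p).2) with hN0
    set m0 : (Fin n × Fin n) → M :=
      fun p => (f p.1 * f p.2) ^ (N0 - (q p).2) • (q p).1 with hm0
    have hv0 : ∀ p : Fin n × Fin n, v p = LocalizedModule.mk (m0 p)
        (⟨(f p.1 * f p.2) ^ N0, N0, rfl⟩ : Submonoid.powers (f p.1 * f p.2)) := by
      intro p
      have hle : (q p).2 ≤ N0 := by
        rw [hN0]; exact Finset.le_sup (f := fun p : Fin n × Fin n => (q p).2) (Finset.mem_univ p)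
      have hba : (N0 - (q p).2) + (q p).2 = N0 := Nat.sub_add_cancel hle
      rw [hq p, mk_raise (f p.1 * f p.2) (q p).1 ((q p).2) (N0 - (q p).2)]
      rw [hba]
    -- Step 3: the cocycle condition on representatives
    have hcoc : ∀ i j k : Fin n, ∃ L : ℕ, (f i * f j * f k) ^ L •
        (f k ^ N0 • m0 (i, j) - f j ^ N0 • m0 (i, k) + f i ^ N0 • m0 (j, k)) = 0 := by
      intro i j k
      have h := hv i j k
      rw [hv0 (i, j), hv0 (i, k), hv0 (j, k),
        locMap_mk (f i * f j) (f i * f j * f k) (f k) rfl _ _ N0,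
        locMap_mk (f i * f k) (f i * f j * f k) (f j) (by ring) _ _ N0,
        locMap_mk (f j * f k) (f i * f j * f k) (f i) (by ring) _ _ N0,
        mk_sub_mk_same, mk_add_mk_same] at h
      exact (mk_eq_zero_iff _ _ N0).mp h
    choose L hL using hcoc
    set N1 : ℕ := Finset.univ.sup (fun t : Fin n × Fin n × Fin n => L t.1 t.2.1 t.2.2) with hN1
    have hL1 : ∀ i j k : Fin n, (f i * f j * f k) ^ N1 •
        (f k ^ N0 • m0 (i, j) - f j ^ N0 • m0 (i, k) + f i ^ N0 • m0 (j, k)) = 0 := by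
      intro i j k
      have hle : L i j k ≤ N1 := by
        rw [hN1]
        exact Finset.le_sup (f := fun t : Fin n × Fin n × Fin n => L t.1 t.2.1 t.2.2)
          (Finset.mem_univ (i, j, k))
      rw [show N1 = (N1 - L i j k) + L i j k from (Nat.sub_add_cancel hle).symm,
        pow_add, mul_smul, hL i j k, smul_zero]
    -- Step 4: final exponent and numerators
    set N : ℕ := N1 + N0 with hN
    set w : (Fin n × Fin n) → M := fun p => (f p.1 * f p.2) ^ N1 • m0 p with hw'
    have hw : ∀ p : Fin n × Fin n, v p = LocalizedModule.mk (w p)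
        (⟨(f p.1 * f p.2) ^ N, N, rfl⟩ : Submonoid.powers (f p.1 * f p.2)) :=
      fun p => (hv0 p).trans (mk_raise _ _ N0 N1)
    have hrel : ∀ i j k : Fin n,
        f j ^ N • w (i, k) - f i ^ N • w (j, k) = f k ^ N • w (i, j) := by
      intro i j k
      have h2 : f k ^ N • w (i, j) - f j ^ N • w (i, k) + f i ^ N • w (j, k) =
          (f i * f j * f k) ^ N1 •
          (f k ^ N0 • m0 (i, j) - f j ^ N0 • m0 (i, k) + f i ^ N0 • m0 (j, k)) := by
        simp only [hw', hN, smul_sub, smul_add, smul_smul]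
        module
      have h3 : f k ^ N • w (i, j) + f i ^ N • w (j, k) - f j ^ N • w (i, k) = 0 := by
        rw [← sub_add_eq_add_sub, h2, hL1]
      have h4 := sub_eq_zero.mp h3
      rw [eq_comm, ← sub_eq_iff_eq_add] at h4
      rw [← h4]
    -- Step 5: partition of unity
    have hNtop : Ideal.span (Set.range fun i => f i ^ N) = ⊤ := by
      have h := Ideal.span_pow_eq_top (Set.range f) hf N
      rwa [← Set.range_comp] at h
    have h1 : (1 : R) ∈ Ideal.span (Set.range fun i => f i ^ N) :=
      hNtop.symm ▸ Submodule.mem_top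
    obtain ⟨a, ha⟩ := Ideal.mem_span_range_iff_exists_fun.mp h1
    -- Step 6: the preimage
    refine ⟨fun i => ∑ t : Fin n, a t •
      LocalizedModule.mk (w (i, t)) (⟨f i ^ N, N, rfl⟩ : Submonoid.powers (f i)), ?_⟩
    funext p
    obtain ⟨i, j⟩ := p
    simp only [map_sum, map_smul]
    have e1 : ∀ t : Fin n, locMap (f i) (f i * f j) (dvd_mul_right _ _)
        (LocalizedModule.mk (w (i, t)) (⟨f i ^ N, N, rfl⟩ : Submonoid.powers (f i))) =
        LocalizedModule.mk (f j ^ N • w (i, t))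
          (⟨(f i * f j) ^ N, N, rfl⟩ : Submonoid.powers (f i * f j)) :=
      fun t => locMap_mk (f i) (f i * f j) (f j) rfl _ _ N
    have e2 : ∀ t : Fin n, locMap (f j) (f i * f j) (dvd_mul_left _ _)
        (LocalizedModule.mk (w (j, t)) (⟨f j ^ N, N, rfl⟩ : Submonoid.powers (f j))) =
        LocalizedModule.mk (f i ^ N • w (j, t))
          (⟨(f i * f j) ^ N, N, rfl⟩ : Submonoid.powers (f i * f j)) :=
      fun t => locMap_mk (f j) (f i * f j) (f i) (by ring) _ _ N
    simp only [e1, e2]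
    rw [← Finset.sum_sub_distrib]
    have e3 : ∀ t : Fin n,
        a t • LocalizedModule.mk (f j ^ N • w (i, t))
            (⟨(f i * f j) ^ N, N, rfl⟩ : Submonoid.powers (f i * f j)) -
          a t • LocalizedModule.mk (f i ^ N • w (j, t))
            (⟨(f i * f j) ^ N, N, rfl⟩ : Submonoid.powers (f i * f j)) =
        (a t * f t ^ N) • LocalizedModule.mk (w (i, j))
            (⟨(f i * f j) ^ N, N, rfl⟩ : Submonoid.powers (f i * f j)) := by
      intro t
      rw [← smul_sub, mk_sub_mk_same, hrel i j t, ← LocalizedModule.smul'_mk, smul_smul]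
    simp only [e3]
    rw [← Finset.sum_smul, ha, one_smul]
    exact (hw (i, j)).symm
  · -- backward: coboundaries are cocycles
    rintro ⟨u, rfl⟩ i j k
    have d1 : f i ∣ f i * f j * f k := ⟨f j * f k, by ring⟩
    have d2 : f j ∣ f i * f j * f k := ⟨f i * f k, by ring⟩
    have d3 : f k ∣ f i * f j * f k := ⟨f i * f j, by ring⟩
    simp only [map_sub]
    rw [locMap_locMap (f i) (f i * f j) (f i * f j * f k) (dvd_mul_right _ _)
        (dvd_mul_right _ _) d1 (u i),
      locMap_locMap (f j) (f i * f j) (f i * f j * f k) (dvd_mul_left _ _)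
        (dvd_mul_right _ _) d2 (u j),
      locMap_locMap (f i) (f i * f k) (f i * f j * f k) (dvd_mul_right _ _)
        ⟨f j, by ring⟩ d1 (u i),
      locMap_locMap (f k) (f i * f k) (f i * f j * f k) (dvd_mul_left _ _)
        ⟨f j, by ring⟩ d3 (u k),
      locMap_locMap (f j) (f j * f k) (f i * f j * f k) (dvd_mul_right _ _)
        ⟨f i, by ring⟩ d2 (u j),
      locMap_locMap (f k) (f j * f k) (f i * f j * f k) (dvd_mul_left _ _)
        ⟨f i, by ring⟩ d3 (u k)]
    abel
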